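/- Let X have density μ on a cube B ⊆ ℝ^d of side length h with center c_B, where μ is L_μ-Lipschitz in ‖·‖_∞ and μ(x) ≥ μ_m > 0. With U = (X − c_B)/h, for any i ≠ j, |E[U_i U_j | X ∈ B]| ≤ L_μ h / (8 μ_m). -/

import Mathlib

open Set MeasureTheory

theorem stmt_8 (d : ℕ) (h Lμ μm : ℝ) (hh : 0 < h) (hLμ : 0 ≤ Lμ) (hμm : 0 < μm)
    (c : Fin d → ℝ) (μ : (Fin d → ℝ) → ℝ)
    (B : Set (Fin d → ℝ))
    (hB : B = Icc (fun j => c j - h / 2) (fun j => c j + h / 2))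
    (hlip : ∀ x x' : Fin d → ℝ, |μ x - μ x'| ≤ Lμ * ‖x - x'‖)
    (hlow : ∀ x ∈ B, μm ≤ μ x)
    (i j : Fin d) (hij : i ≠ j) :
    |(∫ x in B, ((x i - c i) / h) * ((x j - c j) / h) * μ x) / (∫ x in B, μ x)|
      ≤ Lμ * h / (8 * μm) := by
  classical
  set a : Fin d → ℝ := fun j => c j - h / 2 with ha
  set b : Fin d → ℝ := fun j => c j + h / 2 with hb
  have hab : a ≤ b := fun k => by
    simp only [ha, hb]; linarith
  -- basic facts about B
  have hBmeas : MeasurableSet B := by rw [hB]; exact measurableSet_Icc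
  have hBcompact : IsCompact B := by rw [hB]; exact isCompact_Icc
  have hvol : (volume B).toReal = h ^ d := by
    rw [hB]
    rw [Real.volume_Icc_pi_toReal hab]
    simp only [ha, hb]
    have : ∀ k : Fin d, (c k + h / 2) - (c k - h / 2) = h := fun k => by ring
    simp_rw [show (fun k => (c k + h / 2) - (c k - h / 2)) = fun _ => h from funext this]
    simp [Finset.prod_const]
  have hvolfin : volume B < ⊤ := by
    rw [hB]
    exact (isCompact_Icc).measure_lt_top
  -- continuity of μ
  have hμcont : Continuous μ := by
    have : LipschitzWith ⟨Lμ, hLμ⟩ μ := by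
      apply LipschitzWith.of_dist_le_mul
      intro x y
      rw [Real.dist_eq, dist_eq_norm]
      exact hlip x y
    exact this.continuous
  set g : (Fin d → ℝ) → ℝ := fun x => ((x i - c i) / h) * ((x j - c j) / h) with hg
  have hgcont : Continuous g := by
    apply Continuous.mul <;> exact ((continuous_apply _).sub continuous_const).div_const _
  -- bounds on g on B
  have hgbound : ∀ x ∈ B, |g x| ≤ 1 / 4 := by
    intro x hx
    rw [hB] at hx
    obtain ⟨hx1, hx2⟩ := hx
    have hi1 := hx1 i; have hi2 := hx2 i; have hj1 := hx1 j; have hj2 := hx2 j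
    simp only [ha, hb] at hi1 hi2 hj1 hj2
    have h1 : |(x i - c i) / h| ≤ 1 / 2 := by
      rw [abs_div, abs_of_pos hh, div_le_iff₀ hh, abs_le]
      constructor <;> nlinarith
    have h2 : |(x j - c j) / h| ≤ 1 / 2 := by
      rw [abs_div, abs_of_pos hh, div_le_iff₀ hh, abs_le]
      constructor <;> nlinarith
    calc |g x| = |(x i - c i) / h| * |(x j - c j) / h| := abs_mul _ _
      _ ≤ (1/2) * (1/2) := by
          apply mul_le_mul h1 h2 (abs_nonneg _) (by norm_num)
      _ = 1/4 := by norm_num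
  -- Lipschitz bound on B
  have hμbound : ∀ x ∈ B, |μ x - μ c| ≤ Lμ * (h / 2) := by
    intro x hx
    rw [hB] at hx
    obtain ⟨hx1, hx2⟩ := hx
    have hnorm : ‖x - c‖ ≤ h / 2 := by
      apply pi_norm_le_iff_of_nonneg (by linarith) |>.2
      intro k
      have h1 := hx1 k; have h2 := hx2 k
      simp only [ha, hb] at h1 h2
      rw [Pi.sub_apply, Real.norm_eq_abs, abs_le]
      constructor <;> linarith
    calc |μ x - μ c| ≤ Lμ * ‖x - c‖ := hlip x c
      _ ≤ Lμ * (h / 2) := by apply mul_le_mul_of_nonneg_left hnorm hLμ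
  -- the reflection map
  set T : (Fin d → ℝ) → (Fin d → ℝ) := fun x k => if k = i then 2 * c i - x k else x k with hT
  have hTT : ∀ x, T (T x) = x := by
    intro x; funext k
    by_cases hk : k = i <;> simp [hT, hk]
  have hTmeas : Measurable T := by
    apply measurable_pi_lambda
    intro k
    by_cases hk : k = i <;> simp only [hT, hk, if_true, if_false]
    · exact measurable_const.sub (measurable_pi_apply _)
    · exact measurable_pi_apply _
  have hE : MeasurePreserving T (volume : Measure (Fin d → ℝ)) volume := by
    have hf : ∀ k : Fin d, MeasurePreserving
        (fun t : ℝ => if k = i then 2 * c i - t else t) volume volume := by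
      intro k
      by_cases hk : k = i
      · simp only [hk, if_true]
        have h1 : MeasurePreserving (fun t : ℝ => 2 * c i + t) volume volume :=
          measurePreserving_add_left volume (2 * c i)
        have h2 : MeasurePreserving (fun t : ℝ => -t) volume volume :=
          Measure.measurePreserving_neg volume
        simpa [sub_eq_add_neg, Function.comp_def] using h1.comp h2
      · simp only [hk, if_false]
        exact MeasurePreserving.id volume
    have key := measurePreserving_pi (fun _ : Fin d => (volume : Measure ℝ))
      (fun _ => volume) hf
    have heq : (fun (x : Fin d → ℝ) k =>
        (fun t : ℝ => if k = i then 2 * c i - t else t) (x k)) = T := by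
      funext x k; simp [hT]
    rw [heq] at key
    simpa [volume_pi] using key
  have hTemb : MeasurableEmbedding T :=
    (MeasurableEquiv.mk (Equiv.mk T T (fun x => hTT x) (fun x => hTT x))
      hTmeas hTmeas).measurableEmbedding
  have hmono : ∀ x ∈ B, T x ∈ B := by
    intro x hx
    rw [hB, mem_Icc] at hx ⊢
    obtain ⟨h1, h2⟩ := hx
    refine ⟨fun k => ?_, fun k => ?_⟩ <;> by_cases hk : k = i
    · subst hk
      have e1 : c k - h / 2 ≤ x k := h1 k
      have e2 : x k ≤ c k + h / 2 := h2 k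
      show a k ≤ T x k
      show c k - h / 2 ≤ if k = k then 2 * c k - x k else x k
      rw [if_pos rfl]; linarith
    · have e1 : a k ≤ x k := h1 k
      show a k ≤ if k = i then 2 * c i - x k else x k
      rw [if_neg hk]; exact e1
    · subst hk
      have e1 : c k - h / 2 ≤ x k := h1 k
      have e2 : x k ≤ c k + h / 2 := h2 k
      show T x k ≤ b k
      show (if k = k then 2 * c k - x k else x k) ≤ c k + h / 2
      rw [if_pos rfl]; linarith
    · have e2 : x k ≤ b k := h2 k
      show (if k = i then 2 * c i - x k else x k) ≤ b k
      rw [if_neg hk]; exact e2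
  have hTpre : T ⁻¹' B = B := by
    ext x
    constructor
    · intro hx
      have := hmono (T x) hx
      rwa [hTT] at this
    · exact fun hx => hmono x hx
  have hgT : ∀ x, g (T x) = -g x := by
    intro x
    have h1 : T x i = 2 * c i - x i := by
      show (if i = i then 2 * c i - x i else x i) = _
      rw [if_pos rfl]
    have h2 : T x j = x j := by
      show (if j = i then 2 * c i - x j else x j) = x j
      rw [if_neg (fun hji => hij hji.symm)]
    simp only [hg, h1, h2]; ring
  -- the key symmetry fact: ∫_B g = 0
  have hzero : (∫ x in B, g x) = 0 := by
    have key : (∫ x in B, g x) = ∫ x in T ⁻¹' B, g (T x) :=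
      (hE.setIntegral_preimage_emb hTemb g B).symm
    rw [hTpre] at key
    have : (∫ x in B, g (T x)) = ∫ x in B, -g x := by
      congr 1; funext x; exact hgT x
    rw [this, integral_neg] at key
    linarith
  -- integrability facts
  have hint1 : IntegrableOn (fun x => g x * μ x) B volume :=
    (hgcont.mul hμcont).continuousOn.integrableOn_compact hBcompact
  have hint2 : IntegrableOn (fun x => g x * (μ x - μ c)) B volume :=
    (hgcont.mul (hμcont.sub continuous_const)).continuousOn.integrableOn_compact hBcompact
  have hint3 : IntegrableOn g B volume :=
    hgcont.continuousOn.integrableOn_compact hBcompact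
  have hintμ : IntegrableOn μ B volume :=
    hμcont.continuousOn.integrableOn_compact hBcompact
  -- split the numerator
  have hsplit : (∫ x in B, g x * μ x) =
      (∫ x in B, g x * (μ x - μ c)) + μ c * (∫ x in B, g x) := by
    rw [← integral_const_mul, ← integral_add hint2 (hint3.const_mul (μ c))]
    congr 1; funext x; ring
  rw [hzero, mul_zero, add_zero] at hsplit
  -- bound the numerator
  have hnum : |∫ x in B, g x * μ x| ≤ (Lμ * h / 8) * h ^ d := by
    rw [hsplit]
    have := norm_setIntegral_le_of_norm_le_const (C := Lμ * h / 8)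
      (f := fun x => g x * (μ x - μ c)) hvolfin (fun x hx => ?_)
    · rw [Real.norm_eq_abs] at this
      rw [measureReal_def, hvol] at this
      exact this
    · rw [Real.norm_eq_abs, abs_mul]
      calc |g x| * |μ x - μ c| ≤ (1/4) * (Lμ * (h / 2)) := by
            apply mul_le_mul (hgbound x hx) (hμbound x hx) (abs_nonneg _) (by norm_num)
        _ = Lμ * h / 8 := by ring
  -- bound the denominator
  have hden : μm * h ^ d ≤ ∫ x in B, μ x := by
    have := setIntegral_ge_of_const_le hBmeas hvolfin.ne hlow hintμ
    rw [measureReal_def, hvol, smul_eq_mul] at this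
    linarith
  have hdenpos : 0 < ∫ x in B, μ x := lt_of_lt_of_le (by positivity) hden
  -- conclude
  have hhd : (0:ℝ) < h ^ d := pow_pos hh d
  rw [abs_div, abs_of_pos hdenpos]
  calc |∫ x in B, g x * μ x| / (∫ x in B, μ x)
      ≤ ((Lμ * h / 8) * h ^ d) / (μm * h ^ d) := by
        apply div_le_div₀ (by positivity) hnum (by positivity) hden
    _ = Lμ * h / (8 * μm) := by
        field_simp
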